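/- Let n be a positive odd integer and let p > n + 1 be a prime. Then the sum in ℤ/pℤ of 1/(i_1 ⋯ i_n) over all n-tuples of integers 0 < i_1 < i_2 < ⋯ < i_n < p with i_1 ≡ 1 or 2 (mod 6) equals the sum in ℤ/pℤ of 1/(i_1 ⋯ i_n) over all n-tuples of integers 0 < i_1 < i_2 < ⋯ < i_n < p with i_1 ≡ 4 or 5 (mod 6). -/

import Mathlib

open Finset Polynomial



/-- The 6-periodic weight: +1 at 1,2; −1 at 4,5; 0 at 0,3 (mod 6). -/
def chiSix (m : ℤ) : ℤ :=
  if m % 6 = 1 ∨ m % 6 = 2 then 1 else if m % 6 = 4 ∨ m % 6 = 5 then -1 else 0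

lemma chiSix_emod (a : ℤ) : chiSix a = chiSix (a % 6) := by
  unfold chiSix
  rw [Int.emod_emod_of_dvd a (by norm_num)]

lemma chiSix_rec (a : ℤ) : chiSix (a + 2) = chiSix (a + 1) - chiSix a := by
  have h : a % 6 = 0 ∨ a % 6 = 1 ∨ a % 6 = 2 ∨ a % 6 = 3 ∨ a % 6 = 4 ∨ a % 6 = 5 := by omega
  rw [chiSix_emod (a+2), chiSix_emod (a+1), chiSix_emod a]
  rcases h with h | h | h | h | h | h <;>
    rw [show (a+2) % 6 = (a % 6 + 2) % 6 by omega, show (a+1) % 6 = (a % 6 + 1) % 6 by omega,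
      h] <;> decide

lemma chiSix_sym {a b : ℤ} (h : (a + b) % 6 = 3) : chiSix a = chiSix b := by
  have h6 : a % 6 = 0 ∨ a % 6 = 1 ∨ a % 6 = 2 ∨ a % 6 = 3 ∨ a % 6 = 4 ∨ a % 6 = 5 := by omega
  rw [chiSix_emod a, chiSix_emod b]
  rcases h6 with h6 | h6 | h6 | h6 | h6 | h6
  · rw [h6, show b % 6 = 3 by omega]; decide
  · rw [h6, show b % 6 = 2 by omega]; decide
  · rw [h6, show b % 6 = 1 by omega]; decide
  · rw [h6, show b % 6 = 0 by omega]; decide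
  · rw [h6, show b % 6 = 5 by omega]; decide
  · rw [h6, show b % 6 = 4 by omega]; decide

lemma chiSix_binom (X : ℕ) (P : ℤ) :
    ∑ k ∈ range (X + 1), (-1 : ℤ) ^ k * chiSix (P - k) * (X.choose k) = chiSix (P + X) := by
  induction X generalizing P with
  | zero => simp
  | succ X ih =>
    rw [Finset.sum_range_succ' _ (X + 1)]
    have hsplit : ∀ k ∈ range (X + 1),
        (-1 : ℤ) ^ (k+1) * chiSix (P - ↑(k+1)) * ((X+1).choose (k+1)) =
          -((-1 : ℤ) ^ k * chiSix ((P-1) - k) * (X.choose k))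
          + (-1 : ℤ) ^ (k+1) * chiSix (P - ↑(k+1)) * (X.choose (k+1)) := by
      intro k _
      have e : P - ((k+1 : ℕ) : ℤ) = (P - 1) - k := by push_cast; ring
      rw [Nat.choose_succ_succ, e]
      push_cast; ring
    rw [Finset.sum_congr rfl hsplit, Finset.sum_add_distrib]
    have h1 : ∑ k ∈ range (X+1), -((-1 : ℤ) ^ k * chiSix ((P-1) - k) * (X.choose k))
        = -chiSix ((P-1) + X) := by
      rw [Finset.sum_neg_distrib, ih (P-1)]
    have h2 : ∑ k ∈ range (X+1), (-1 : ℤ)^(k+1) * chiSix (P - ↑(k+1)) * (X.choose (k+1))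
        = chiSix (P + X) - chiSix P := by
      have ht := Finset.sum_range_succ' (fun k => (-1:ℤ)^k * chiSix (P - ↑k) * (X.choose k)) (X+1)
      rw [Finset.sum_range_succ _ (X+1)] at ht
      simp only [Nat.choose_succ_self, Nat.cast_zero, mul_zero, add_zero, pow_zero, one_mul,
        Nat.choose_zero_right, Nat.cast_one, mul_one, Nat.cast_ofNat] at ht
      rw [ih P] at ht
      rw [show P - (0:ℤ) = P by ring] at ht
      linarith
    rw [h1, h2]
    simp only [pow_zero, one_mul, Nat.choose_zero_right, Nat.cast_one, mul_one, Nat.cast_zero,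
      Nat.cast_add, sub_zero]
    have hr := chiSix_rec (P + X - 1)
    have ha : chiSix (P + ((X:ℤ) + 1)) = chiSix (P + ↑X - 1 + 2) := by congr 1; ring
    have hb : chiSix (P + (X:ℤ) - 1 + 1) = chiSix (P + ↑X) := by congr 1; ring
    have hc : chiSix (P + (X:ℤ) - 1) = chiSix (P - 1 + ↑X) := by congr 1; ring
    rw [ha, hr, hb, hc]
    ring

lemma prod_range_cast_sub {R : Type*} [CommRing R] (X k : ℕ) :
    ∏ t ∈ range k, ((X : R) - (t : R)) = (X.descFactorial k : R) := by
  by_cases h : k ≤ X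
  · rw [Nat.descFactorial_eq_prod_range, Nat.cast_prod]
    refine Finset.prod_congr rfl fun t ht => ?_
    rw [Nat.cast_sub (le_of_lt (lt_of_lt_of_le (mem_range.mp ht) h))]
  · push_neg at h
    rw [Nat.descFactorial_eq_zero_iff_lt.mpr h, Nat.cast_zero]
    exact Finset.prod_eq_zero (mem_range.mpr h) (by simp)

lemma fact_mul_fact_zmod (p : ℕ) [Fact p.Prime] :
    ∀ k, k < p →
      ((Nat.factorial (p - 1 - k) : ℕ) : ZMod p) * ((Nat.factorial k : ℕ) : ZMod p)
        = (-1) ^ (k + 1) := by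
  intro k
  induction k with
  | zero => intro _; simp [ZMod.wilsons_lemma]
  | succ k ih =>
    intro hk
    have hk' : k < p := Nat.lt_of_succ_lt hk
    have ihk := ih hk'
    have h1 : p - 1 - k = (p - 2 - k) + 1 := by omega
    have h2 : p - 1 - (k + 1) = p - 2 - k := by omega
    have hnat : Nat.factorial (p - 1 - k) = (p - 1 - k) * Nat.factorial (p - 2 - k) := by
      rw [h1, Nat.factorial_succ, ← h1]
    have hcast : ((p - 1 - k : ℕ) : ZMod p) = -((k : ZMod p) + 1) := by
      have hz : ((p : ℕ) : ZMod p) = 0 := ZMod.natCast_self p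
      have he : (p - 1 - k) + (k + 1) = p := by omega
      have h3 := congrArg (Nat.cast (R := ZMod p)) he
      push_cast at h3
      linear_combination h3 + hz
    rw [hnat] at ihk
    push_cast at ihk
    rw [h2, Nat.factorial_succ]
    push_cast
    linear_combination (-1) * ihk
      + ((Nat.factorial (p-2-k) : ZMod p) * (Nat.factorial k : ZMod p)) * hcast


/-- The key auxiliary polynomial. -/
noncomputable def curiousPsi (p : ℕ) : Polynomial (ZMod p) :=
  ∑ k ∈ Finset.Ioo 0 p,
    C (((chiSix ((p : ℤ) - k) : ℤ) : ZMod p) * (-1) ^ k * ((Nat.factorial k : ℕ) : ZMod p)⁻¹) *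
      ∏ t ∈ range k, (X - C ((t : ℕ) : ZMod p))

lemma sum_Ioo_choose (p X : ℕ) (hp : 0 < p) (hX : X < p) :
    ∑ k ∈ Finset.Ioo 0 p, (-1 : ℤ) ^ k * chiSix ((p : ℤ) - k) * (X.choose k)
      = chiSix ((p : ℤ) + X) - chiSix p := by
  have h0 : Finset.Ioo 0 p = (range p).erase 0 := by
    ext x; simp only [mem_Ioo, mem_erase, mem_range]; omega
  have h1 : ∑ k ∈ range p, (-1 : ℤ) ^ k * chiSix ((p : ℤ) - k) * (X.choose k)
      = ∑ k ∈ range (X + 1), (-1 : ℤ) ^ k * chiSix ((p : ℤ) - k) * (X.choose k) := by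
    refine (Finset.sum_subset (by intro x hx; simp at hx ⊢; omega) ?_).symm
    intro k _ hk
    simp only [mem_range, not_lt] at hk
    rw [Nat.choose_eq_zero_of_lt (by omega)]
    simp
  have h2 := Finset.add_sum_erase (range p)
    (fun k => (-1 : ℤ) ^ k * chiSix ((p : ℤ) - k) * (X.choose k)) (mem_range.mpr hp)
  rw [h0, ← chiSix_binom X p]
  simp only [pow_zero, Nat.cast_zero, sub_zero, one_mul, Nat.choose_zero_right,
    Nat.cast_one, mul_one] at h2
  rw [← h1, ← h2]
  ring

lemma curiousPsi_eval (p : ℕ) [Fact p.Prime] (X : ℕ) (hX : X < p) :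
    (curiousPsi p).eval ((X : ℕ) : ZMod p)
      = ((chiSix ((p : ℤ) + X) - chiSix p : ℤ) : ZMod p) := by
  have hp : 0 < p := (Fact.out : p.Prime).pos
  rw [curiousPsi, eval_finset_sum]
  have hterm : ∀ k ∈ Finset.Ioo 0 p,
      eval ((X : ℕ) : ZMod p)
        (C (((chiSix ((p : ℤ) - k) : ℤ) : ZMod p) * (-1) ^ k * ((Nat.factorial k : ℕ) : ZMod p)⁻¹) *
          ∏ t ∈ range k, (Polynomial.X - C ((t : ℕ) : ZMod p)))
      = (((-1 : ℤ) ^ k * chiSix ((p : ℤ) - k) * (X.choose k) : ℤ) : ZMod p) := by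
    intro k hk
    simp only [mem_Ioo] at hk
    have hfac : ((Nat.factorial k : ℕ) : ZMod p) ≠ 0 := by
      rw [Ne, ZMod.natCast_eq_zero_iff]
      intro hdvd
      have := (Nat.Prime.dvd_factorial (Fact.out)).mp hdvd
      omega
    rw [eval_mul, eval_C, eval_prod]
    simp only [eval_sub, eval_X, eval_C]
    rw [prod_range_cast_sub, Nat.descFactorial_eq_factorial_mul_choose]
    push_cast
    field_simp
  rw [Finset.sum_congr rfl hterm, ← Int.cast_sum, ← sum_Ioo_choose p X hp hX]

lemma coeff_comp_neg_X {R : Type*} [CommRing R] (q : Polynomial R) (k : ℕ) :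
    (q.comp (-X)).coeff k = (-1) ^ k * q.coeff k := by
  induction q using Polynomial.induction_on' with
  | add r s hr hs => simp only [add_comp, coeff_add, hr, hs]; ring
  | monomial i a =>
    rw [← C_mul_X_pow_eq_monomial, mul_comp, C_comp, pow_comp, X_comp]
    have : (-X : Polynomial R) ^ i = C ((-1)^i) * X ^ i := by
      rw [neg_pow]; simp [map_pow]
    rw [this, ← mul_assoc, ← C_mul, coeff_C_mul, coeff_C_mul, coeff_X_pow]
    by_cases h : k = i
    · simp [h]; ring
    · simp [h]

lemma curiousPsi_natDegree_le (p : ℕ) [Fact p.Prime] : (curiousPsi p).natDegree ≤ p - 1 := by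
  refine Polynomial.natDegree_sum_le_of_forall_le _ _ fun k hk => ?_
  refine le_trans (natDegree_mul_le) ?_
  rw [natDegree_C, zero_add]
  refine le_trans (natDegree_prod_le _ _) ?_
  refine le_trans (Finset.sum_le_card_nsmul _ _ 1 fun t _ =>
    le_trans (natDegree_sub_le _ _) (by simp)) ?_
  simp only [card_range, smul_eq_mul, mul_one]
  exact Nat.le_sub_one_of_lt (mem_Ioo.mp hk).2

lemma curiousPsi_eval_neg (p : ℕ) [Fact p.Prime] (hodd : p % 2 = 1) (a : ZMod p) :
    (curiousPsi p).eval (-a) = (curiousPsi p).eval a := by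
  by_cases h0 : a = 0
  · rw [h0, neg_zero]
  · obtain ⟨Xv, hv, rfl⟩ : ∃ Xq : ℕ, Xq < p ∧ ((Xq : ℕ) : ZMod p) = a :=
      ⟨a.val, ZMod.val_lt a, ZMod.natCast_rightInverse a⟩
    have hv0 : Xv ≠ 0 := fun h => h0 (by simp [h])
    have hneg : -((Xv : ℕ) : ZMod p) = ((p - Xv : ℕ) : ZMod p) := by
      rw [Nat.cast_sub hv.le, ZMod.natCast_self, zero_sub]
    rw [hneg, curiousPsi_eval p _ (by omega), curiousPsi_eval p _ hv]
    have hc : ((p - Xv : ℕ) : ℤ) = (p : ℤ) - Xv := by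
      rw [Int.ofNat_sub hv.le]
    have hp2 : (p : ℤ) % 2 = 1 := by omega
    have hsym : chiSix ((p : ℤ) + ((p : ℤ) - Xv)) = chiSix ((p : ℤ) + Xv) :=
      chiSix_sym (by omega)
    rw [hc, hsym]

lemma curiousPsi_comp_neg (p : ℕ) [Fact p.Prime] (hodd : p % 2 = 1) :
    (curiousPsi p).comp (-X) = curiousPsi p := by
  have h := Polynomial.eq_zero_of_natDegree_lt_card_of_eval_eq_zero
    ((curiousPsi p).comp (-X) - curiousPsi p) (f := (id : ZMod p → ZMod p))
    Function.injective_id ?_ ?_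
  · exact sub_eq_zero.mp h
  · intro a
    simp only [id, eval_sub, eval_comp, eval_neg, eval_X]
    rw [curiousPsi_eval_neg p hodd, sub_self]
  · have h1 : ((curiousPsi p).comp (-X)).natDegree ≤ p - 1 := by
      refine le_trans (natDegree_comp_le) ?_
      rw [natDegree_neg, natDegree_X, mul_one]
      exact curiousPsi_natDegree_le p
    have h2 := curiousPsi_natDegree_le p
    have hp : 1 < p := (Fact.out : p.Prime).one_lt
    refine lt_of_le_of_lt (le_trans (natDegree_sub_le _ _) (max_le h1 h2)) ?_
    rw [ZMod.card]
    omega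

lemma curiousPsi_coeff_eq_zero (p : ℕ) [Fact p.Prime] (hodd : p % 2 = 1) {n : ℕ} (hn : Odd n) :
    (curiousPsi p).coeff n = 0 := by
  have h := congrArg (fun q => Polynomial.coeff q n) (curiousPsi_comp_neg p hodd)
  simp only [coeff_comp_neg_X] at h
  rw [Odd.neg_one_pow hn, neg_one_mul] at h
  have h2 : (2 : ZMod p) * (curiousPsi p).coeff n = 0 := by linear_combination -h
  have hchar : (2 : ZMod p) ≠ 0 := by
    have : ((2 : ℕ) : ZMod p) ≠ 0 := by
      rw [Ne, ZMod.natCast_eq_zero_iff]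
      intro hdvd
      have h2 := Nat.le_of_dvd (by norm_num) hdvd
      have hp := (Fact.out : p.Prime).two_le
      omega
    simpa using this
  exact (mul_eq_zero.mp h2).resolve_left hchar


noncomputable def curiousF (p : ℕ) : Polynomial (ZMod p) :=
  ∑ m ∈ Finset.Ioo 0 p,
    C (((chiSix (m : ℤ) : ℤ) : ZMod p) * ((m : ℕ) : ZMod p)⁻¹
        * (∏ j ∈ Finset.Ioo m p, ((j : ℕ) : ZMod p))⁻¹) *
      ∏ j ∈ Finset.Ioo m p, (X + C ((j : ℕ) : ZMod p))

lemma cast_reflect (p j : ℕ) (hj : j ≤ p) :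
    ((j : ℕ) : ZMod p) = -(((p - j : ℕ)) : ZMod p) := by
  have h : ((j + (p - j) : ℕ) : ZMod p) = ((p : ℕ) : ZMod p) := by
    rw [Nat.add_sub_cancel' hj]
  rw [ZMod.natCast_self] at h
  push_cast at h
  linear_combination h

lemma prod_Ico_cast_reflect (p m : ℕ) [Fact p.Prime] (hm : 0 < m) (hmp : m < p) :
    ∏ j ∈ Finset.Ico m p, ((j : ℕ) : ZMod p)
      = (-1) ^ (p - m) * ((Nat.factorial (p - m) : ℕ) : ZMod p) := by
  have h1 : ∏ j ∈ Finset.Ico m p, ((j : ℕ) : ZMod p)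
      = ∏ t ∈ Finset.Ico 1 (p - m + 1), ((-1 : ZMod p) * ((t : ℕ) : ZMod p)) := by
    refine Finset.prod_nbij' (fun j => p - j) (fun t => p - t) ?_ ?_ ?_ ?_ ?_
    · intro a ha; simp only [mem_Ico] at ha ⊢; omega
    · intro a ha; simp only [mem_Ico] at ha ⊢; omega
    · intro a ha; simp only [mem_Ico] at ha; omega
    · intro a ha; simp only [mem_Ico] at ha; omega
    · intro a ha
      simp only [mem_Ico] at ha
      rw [cast_reflect p a (by omega)]
      ring
  rw [h1, Finset.prod_mul_distrib, Finset.prod_const, Nat.card_Ico, Nat.add_sub_cancel]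
  congr 1
  rw [← Nat.cast_prod, Finset.prod_Ico_id_eq_factorial]

lemma X_mul_curiousF (p : ℕ) [Fact p.Prime] : X * curiousF p = curiousPsi p := by
  rw [curiousF, curiousPsi, Finset.mul_sum]
  refine Finset.sum_nbij' (fun m => p - m) (fun k => p - k) ?_ ?_ ?_ ?_ ?_
  · intro a ha; simp only [mem_Ioo] at ha ⊢; omega
  · intro a ha; simp only [mem_Ioo] at ha ⊢; omega
  · intro a ha; simp only [mem_Ioo] at ha; omega
  · intro a ha; simp only [mem_Ioo] at ha; omega
  · intro m hm
    simp only [mem_Ioo] at hm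
    try dsimp only
    obtain ⟨hm0, hmp⟩ := hm
    -- reflect the product of linear factors
    have hprodref : ∏ j ∈ Finset.Ioo m p, (X + C ((j : ℕ) : ZMod p))
        = ∏ t ∈ Finset.Ioo 0 (p - m), (X - C ((t : ℕ) : ZMod p)) := by
      refine Finset.prod_nbij' (fun j => p - j) (fun t => p - t) ?_ ?_ ?_ ?_ ?_
      · intro a ha; simp only [mem_Ioo] at ha ⊢; omega
      · intro a ha; simp only [mem_Ioo] at ha ⊢; omega
      · intro a ha; simp only [mem_Ioo] at ha; omega
      · intro a ha; simp only [mem_Ioo] at ha; omega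
      · intro a ha
        simp only [mem_Ioo] at ha
        rw [cast_reflect p a (by omega), map_neg]; (try dsimp only); rw [sub_eq_add_neg]
    -- absorb X into the product
    have habsorb : X * ∏ t ∈ Finset.Ioo 0 (p - m), (X - C ((t : ℕ) : ZMod p))
        = ∏ t ∈ range (p - m), (X - C ((t : ℕ) : ZMod p)) := by
      have hr : range (p - m) = insert 0 (Finset.Ioo 0 (p - m)) := by
        ext x; simp only [mem_range, mem_insert, mem_Ioo]; omega
      rw [hr, Finset.prod_insert (by simp)]
      simp
    -- constants
    have hconst : (((chiSix (m : ℤ) : ℤ) : ZMod p) * ((m : ℕ) : ZMod p)⁻¹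
          * (∏ j ∈ Finset.Ioo m p, ((j : ℕ) : ZMod p))⁻¹)
        = (((chiSix ((p : ℤ) - (p - m : ℕ)) : ℤ) : ZMod p) * (-1) ^ (p - m)
          * ((Nat.factorial (p - m) : ℕ) : ZMod p)⁻¹) := by
      have harg : (p : ℤ) - ((p - m : ℕ) : ℤ) = (m : ℤ) := by
        have : ((p - m : ℕ) : ℤ) = (p : ℤ) - m := by rw [Int.ofNat_sub hmp.le]
        rw [this]; ring
      rw [harg]
      have hsplit : Finset.Ico m p = insert m (Finset.Ioo m p) := by
        ext x; simp only [mem_Ico, mem_insert, mem_Ioo]; omega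
      have hIco := prod_Ico_cast_reflect p m hm0 hmp
      rw [hsplit, Finset.prod_insert (by simp)] at hIco
      have hfacne : ((Nat.factorial (p - m) : ℕ) : ZMod p) ≠ 0 := by
        rw [Ne, ZMod.natCast_eq_zero_iff]
        intro hdvd
        have := (Nat.Prime.dvd_factorial (Fact.out)).mp hdvd
        omega
      have hinv : ((m : ℕ) : ZMod p)⁻¹ * (∏ j ∈ Finset.Ioo m p, ((j : ℕ) : ZMod p))⁻¹
          = (-1) ^ (p - m) * ((Nat.factorial (p - m) : ℕ) : ZMod p)⁻¹ := by
        rw [← mul_inv, hIco, mul_inv, ← inv_pow, inv_neg_one]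
      rw [mul_assoc, hinv, mul_assoc]
    rw [← habsorb, ← hprodref, ← hconst]
    ring

/-- e_k of inverses in terms of a coefficient of the product polynomial. -/
lemma esymm_inv_eq_coeff {K : Type*} [Field K] (s : Finset ℕ) (g : ℕ → K)
    (hg : ∀ j ∈ s, g j ≠ 0) (k : ℕ) :
    ∑ t ∈ s.powersetCard k, ∏ j ∈ t, (g j)⁻¹
      = (∏ j ∈ s, g j)⁻¹ * (∏ j ∈ s, (X + C (g j))).coeff k := by
  by_cases hk : k ≤ s.card
  · rw [Finset.prod_X_add_C_coeff s g hk, Finset.mul_sum]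
    refine Finset.sum_nbij' (fun t => s \ t) (fun t => s \ t) ?_ ?_ ?_ ?_ ?_
    · intro t ht
      rw [mem_powersetCard] at ht ⊢
      exact ⟨sdiff_subset, by rw [card_sdiff_of_subset ht.1, ht.2]⟩
    · intro t ht
      rw [mem_powersetCard] at ht ⊢
      refine ⟨sdiff_subset, ?_⟩
      rw [card_sdiff_of_subset ht.1, ht.2]
      omega
    · intro t ht
      rw [mem_powersetCard] at ht
      exact Finset.sdiff_sdiff_eq_self ht.1
    · intro t ht
      rw [mem_powersetCard] at ht
      exact Finset.sdiff_sdiff_eq_self ht.1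
    · intro t ht
      rw [mem_powersetCard] at ht
      have hsd := Finset.prod_sdiff (f := g) ht.1
      have hne : ∏ j ∈ s \ t, g j ≠ 0 :=
        Finset.prod_ne_zero_iff.mpr fun j hj => hg j (sdiff_subset hj)
      have hne' : ∏ j ∈ t, g j ≠ 0 :=
        Finset.prod_ne_zero_iff.mpr fun j hj => hg j (ht.1 hj)
      rw [Finset.prod_inv_distrib, ← hsd]
      field_simp

  · push_neg at hk
    rw [Finset.powersetCard_eq_empty.mpr hk, Finset.sum_empty]
    have hdeg : (∏ j ∈ s, (X + C (g j))).natDegree < k := by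
      refine lt_of_le_of_lt (le_trans (natDegree_prod_le _ _) ?_) hk
      refine le_trans (Finset.sum_le_card_nsmul _ _ 1 fun t _ =>
        le_trans (natDegree_add_le _ _) (by simp)) ?_
      simp
    rw [coeff_eq_zero_of_natDegree_lt hdeg, mul_zero]

/-- Total function returning the minimum of a finset (junk value for ∅). -/
def minHead (s : Finset ℕ) : ℕ := (s.sort (· ≤ ·)).headI

lemma minHead_eq_min' (s : Finset ℕ) (h : s.Nonempty) : minHead s = s.min' h := by
  have hne : s.sort (· ≤ ·) ≠ [] := by
    intro hnil
    have := Finset.length_sort (α := ℕ) (· ≤ ·) (s := s)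
    rw [hnil] at this
    simp only [List.length_nil] at this
    rw [Finset.card_eq_zero.mp this.symm] at h
    exact Finset.not_nonempty_empty h
  obtain ⟨a, l, hal⟩ := List.exists_cons_of_ne_nil hne
  have hlen : 0 < (s.sort (· ≤ ·)).length := by rw [hal]; simp
  have h0 := Finset.sorted_zero_eq_min' (s := s) (h := hlen)
  have ha : (s.sort (· ≤ ·))[0]'hlen = a := by simp [hal]
  rw [minHead, hal, List.headI_cons, ← ha]
  exact h0

lemma minHead_insert (m : ℕ) (t : Finset ℕ) (ht : ∀ x ∈ t, m < x) :
    minHead (insert m t) = m := by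
  rw [minHead_eq_min' _ (insert_nonempty m t)]
  refine le_antisymm (Finset.min'_le _ m (mem_insert_self m t)) ?_
  refine Finset.le_min' _ _ _ fun y hy => ?_
  rcases Finset.mem_insert.mp hy with rfl | hyt
  · exact le_refl y
  · exact (ht y hyt).le

lemma getD_sort_eq_orderEmbOfFin {s : Finset ℕ} {n : ℕ} (hcard : s.card = n) :
    (fun k : Fin n => (s.sort (· ≤ ·)).getD (k : ℕ) 0) = ⇑(s.orderEmbOfFin hcard) := by
  funext k
  have hlt : (k : ℕ) < (s.sort (· ≤ ·)).length := by
    rw [Finset.length_sort, hcard]; exact k.2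
  rw [List.getD_eq_getElem _ _ hlt, Finset.orderEmbOfFin_apply]
  simp [Fin.getElem_fin]

lemma sum_tuples_eq_sum_subsets {K : Type*} [CommRing K] (n p : ℕ) (hn : 0 < n)
    (W g : ℕ → K) :
    ∑ f ∈ (Fintype.piFinset fun _ : Fin n => Finset.Ioo 0 p).filter
        (fun f => ∀ i j : Fin n, i < j → f i < f j),
      W (f ⟨0, hn⟩) * ∏ k : Fin n, g (f k)
    = ∑ s ∈ (Finset.Ioo 0 p).powersetCard n, W (minHead s) * ∏ j ∈ s, g j := by
  refine Finset.sum_nbij' (fun f => Finset.image f Finset.univ)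
    (fun s => fun k : Fin n => (s.sort (· ≤ ·)).getD (k : ℕ) 0) ?_ ?_ ?_ ?_ ?_
  · intro f hf
    obtain ⟨hf1, hf2⟩ := Finset.mem_filter.mp hf
    have hsm : StrictMono f := fun i j h => hf2 i j h
    rw [Finset.mem_powersetCard]
    constructor
    · intro x hx
      obtain ⟨k, -, rfl⟩ := Finset.mem_image.mp hx
      exact Fintype.mem_piFinset.mp hf1 k
    · rw [Finset.card_image_of_injective _ hsm.injective, Finset.card_univ, Fintype.card_fin]
  · intro s hs
    obtain ⟨hsub, hcard⟩ := Finset.mem_powersetCard.mp hs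
    try dsimp only
    rw [getD_sort_eq_orderEmbOfFin hcard]
    rw [Finset.mem_filter]
    constructor
    · exact Fintype.mem_piFinset.mpr fun k => hsub (Finset.orderEmbOfFin_mem s hcard k)
    · exact fun i j h => (s.orderEmbOfFin hcard).strictMono h
  · intro f hf
    obtain ⟨hf1, hf2⟩ := Finset.mem_filter.mp hf
    have hsm : StrictMono f := fun i j h => hf2 i j h
    have hcard : (Finset.image f Finset.univ).card = n := by
      rw [Finset.card_image_of_injective _ hsm.injective, Finset.card_univ, Fintype.card_fin]
    try dsimp only
    rw [getD_sort_eq_orderEmbOfFin hcard]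
    exact (Finset.orderEmbOfFin_unique hcard
      (fun k => Finset.mem_image_of_mem f (Finset.mem_univ k)) hsm).symm
  · intro s hs
    obtain ⟨hsub, hcard⟩ := Finset.mem_powersetCard.mp hs
    try dsimp only
    rw [getD_sort_eq_orderEmbOfFin hcard]
    apply Finset.coe_injective
    rw [Finset.coe_image, Finset.coe_univ, Set.image_univ, Finset.range_orderEmbOfFin]
  · intro f hf
    obtain ⟨hf1, hf2⟩ := Finset.mem_filter.mp hf
    have hsm : StrictMono f := fun i j h => hf2 i j h
    have hmin : minHead (Finset.image f Finset.univ) = f ⟨0, hn⟩ := by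
      have hne : (Finset.image f Finset.univ).Nonempty :=
        ⟨f ⟨0, hn⟩, Finset.mem_image_of_mem f (Finset.mem_univ _)⟩
      rw [minHead_eq_min' _ hne]
      refine le_antisymm (Finset.min'_le _ _ (Finset.mem_image_of_mem f (Finset.mem_univ _))) ?_
      refine Finset.le_min' _ _ _ fun y hy => ?_
      obtain ⟨k, -, rfl⟩ := Finset.mem_image.mp hy
      rcases eq_or_ne k ⟨0, hn⟩ with rfl | hker
      · exact le_refl _
      · have hk0 : (0 : ℕ) < (k : ℕ) := by
          rcases Nat.eq_zero_or_pos (k : ℕ) with h0 | h0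
          · exact absurd (Fin.ext h0 : k = ⟨0, hn⟩) hker
          · exact h0
        exact (hsm (show (⟨0, hn⟩ : Fin n) < k from hk0)).le
    try dsimp only
    rw [hmin, Finset.prod_image (fun x _ y _ h => hsm.injective h)]

lemma sum_subsets_split_min {K : Type*} [CommRing K] (p n : ℕ) (hn : 0 < n) (W g : ℕ → K) :
    ∑ s ∈ (Finset.Ioo 0 p).powersetCard n, W (minHead s) * ∏ j ∈ s, g j
    = ∑ m ∈ Finset.Ioo 0 p,
        W m * (g m * ∑ t ∈ (Finset.Ioo m p).powersetCard (n - 1), ∏ j ∈ t, g j) := by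
  have hrhs : ∑ m ∈ Finset.Ioo 0 p,
        W m * (g m * ∑ t ∈ (Finset.Ioo m p).powersetCard (n - 1), ∏ j ∈ t, g j)
      = ∑ x ∈ (Finset.Ioo 0 p).sigma (fun m => (Finset.Ioo m p).powersetCard (n - 1)),
          W x.1 * (g x.1 * ∏ j ∈ x.2, g j) := by
    rw [Finset.sum_sigma]
    refine Finset.sum_congr rfl fun m _ => ?_
    rw [Finset.mul_sum, Finset.mul_sum]
  rw [hrhs]
  refine Finset.sum_nbij' (fun s => ⟨minHead s, s.erase (minHead s)⟩)
    (fun x => insert x.1 x.2) ?_ ?_ ?_ ?_ ?_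
  · intro s hs
    obtain ⟨hsub, hcard⟩ := Finset.mem_powersetCard.mp hs
    have hne : s.Nonempty := Finset.card_pos.mp (by omega)
    have hmm : minHead s ∈ s := by rw [minHead_eq_min' s hne]; exact s.min'_mem hne
    rw [Finset.mem_sigma]
    constructor
    · exact hsub hmm
    · rw [Finset.mem_powersetCard]
      constructor
      · intro x hx
        obtain ⟨hxne, hxs⟩ := Finset.mem_erase.mp hx
        have h1 : minHead s ≤ x := by
          rw [minHead_eq_min' s hne]; exact Finset.min'_le s x hxs
        have h2 : x < p := (Finset.mem_Ioo.mp (hsub hxs)).2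
        rw [Finset.mem_Ioo]
        exact ⟨lt_of_le_of_ne h1 (Ne.symm hxne ∘ fun h => h), h2⟩
      · rw [Finset.card_erase_of_mem hmm, hcard]
  · intro x hx
    rw [Finset.mem_sigma] at hx
    obtain ⟨hm, ht⟩ := hx
    obtain ⟨hsub, hcard⟩ := Finset.mem_powersetCard.mp ht
    have hmt : x.1 ∉ x.2 := fun h => lt_irrefl x.1 (Finset.mem_Ioo.mp (hsub h)).1
    rw [Finset.mem_powersetCard]
    constructor
    · intro y hy
      rcases Finset.mem_insert.mp hy with rfl | hyt
      · exact hm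
      · have := Finset.mem_Ioo.mp (hsub hyt)
        have := Finset.mem_Ioo.mp hm
        rw [Finset.mem_Ioo]; omega
    · rw [Finset.card_insert_of_notMem hmt, hcard]; omega
  · intro s hs
    obtain ⟨hsub, hcard⟩ := Finset.mem_powersetCard.mp hs
    have hne : s.Nonempty := Finset.card_pos.mp (by omega)
    have hmm : minHead s ∈ s := by rw [minHead_eq_min' s hne]; exact s.min'_mem hne
    exact Finset.insert_erase hmm
  · intro x hx
    rw [Finset.mem_sigma] at hx
    obtain ⟨hm, ht⟩ := hx
    obtain ⟨hsub, hcard⟩ := Finset.mem_powersetCard.mp ht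
    have hlt : ∀ y ∈ x.2, x.1 < y := fun y hy => (Finset.mem_Ioo.mp (hsub hy)).1
    have hmt : x.1 ∉ x.2 := fun h => lt_irrefl x.1 (hlt _ h)
    have hmh : minHead (insert x.1 x.2) = x.1 := minHead_insert x.1 x.2 hlt
    have h2 : (insert x.1 x.2).erase (minHead (insert x.1 x.2)) = x.2 := by
      rw [hmh, Finset.erase_insert hmt]
    try dsimp only
    exact Sigma.ext hmh (heq_of_eq h2)
  · intro s hs
    obtain ⟨hsub, hcard⟩ := Finset.mem_powersetCard.mp hs
    have hne : s.Nonempty := Finset.card_pos.mp (by omega)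
    have hmm : minHead s ∈ s := by rw [minHead_eq_min' s hne]; exact s.min'_mem hne
    rw [← Finset.mul_prod_erase s g hmm]


lemma chiSix_natCast (a : ℕ) :
    chiSix (a : ℤ) = if a % 6 = 1 ∨ a % 6 = 2 then 1
      else if a % 6 = 4 ∨ a % 6 = 5 then -1 else 0 := by
  unfold chiSix
  have h1 : ((a : ℤ) % 6 = 1 ∨ (a : ℤ) % 6 = 2) ↔ (a % 6 = 1 ∨ a % 6 = 2) := by omega
  have h2 : ((a : ℤ) % 6 = 4 ∨ (a : ℤ) % 6 = 5) ↔ (a % 6 = 4 ∨ a % 6 = 5) := by omega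
  simp only [h1, h2]

/-- Let `n` be a positive odd integer and `p > n + 1` a prime. Then the sum in `ℤ/pℤ` of
`1/(i₁⋯iₙ)` over strictly increasing `n`-tuples `0 < i₁ < ⋯ < iₙ < p` with
`i₁ ≡ 1, 2 (mod 6)` equals the corresponding sum with `i₁ ≡ 4, 5 (mod 6)`. -/
theorem curious_congruence_odd_six (n p : ℕ) (hn : 0 < n) (hodd : Odd n)
    (hp : p.Prime) (hnp : n + 1 < p) :
    ∑ f ∈ (Fintype.piFinset fun _ : Fin n => Finset.Ioo 0 p).filter
        (fun f => (∀ i j : Fin n, i < j → f i < f j) ∧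
          (f ⟨0, hn⟩ % 6 = 1 ∨ f ⟨0, hn⟩ % 6 = 2)),
      ∏ k : Fin n, ((f k : ZMod p))⁻¹ =
    ∑ f ∈ (Fintype.piFinset fun _ : Fin n => Finset.Ioo 0 p).filter
        (fun f => (∀ i j : Fin n, i < j → f i < f j) ∧
          (f ⟨0, hn⟩ % 6 = 4 ∨ f ⟨0, hn⟩ % 6 = 5)),
      ∏ k : Fin n, ((f k : ZMod p))⁻¹ := by
  haveI : Fact p.Prime := ⟨hp⟩
  have hp2 : 2 < p := by omega
  have hpodd : p % 2 = 1 := hp.eq_two_or_odd.resolve_left (by omega)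
  rw [← sub_eq_zero]
  have e1 : ∑ f ∈ (Fintype.piFinset fun _ : Fin n => Finset.Ioo 0 p).filter
        (fun f => (∀ i j : Fin n, i < j → f i < f j) ∧
          (f ⟨0, hn⟩ % 6 = 1 ∨ f ⟨0, hn⟩ % 6 = 2)),
      ∏ k : Fin n, ((f k : ZMod p))⁻¹
      = ∑ f ∈ (Fintype.piFinset fun _ : Fin n => Finset.Ioo 0 p).filter
          (fun f => ∀ i j : Fin n, i < j → f i < f j),
        if (f ⟨0, hn⟩ % 6 = 1 ∨ f ⟨0, hn⟩ % 6 = 2) then ∏ k : Fin n, ((f k : ZMod p))⁻¹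
        else 0 := by
    rw [← Finset.filter_filter, Finset.sum_filter]
  have e2 : ∑ f ∈ (Fintype.piFinset fun _ : Fin n => Finset.Ioo 0 p).filter
        (fun f => (∀ i j : Fin n, i < j → f i < f j) ∧
          (f ⟨0, hn⟩ % 6 = 4 ∨ f ⟨0, hn⟩ % 6 = 5)),
      ∏ k : Fin n, ((f k : ZMod p))⁻¹
      = ∑ f ∈ (Fintype.piFinset fun _ : Fin n => Finset.Ioo 0 p).filter
          (fun f => ∀ i j : Fin n, i < j → f i < f j),
        if (f ⟨0, hn⟩ % 6 = 4 ∨ f ⟨0, hn⟩ % 6 = 5) then ∏ k : Fin n, ((f k : ZMod p))⁻¹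
        else 0 := by
    rw [← Finset.filter_filter, Finset.sum_filter]
  rw [e1, e2, ← Finset.sum_sub_distrib]
  have hstep1 : ∀ f ∈ (Fintype.piFinset fun _ : Fin n => Finset.Ioo 0 p).filter
      (fun f => ∀ i j : Fin n, i < j → f i < f j),
      ((if (f ⟨0, hn⟩ % 6 = 1 ∨ f ⟨0, hn⟩ % 6 = 2) then ∏ k : Fin n, ((f k : ZMod p))⁻¹ else 0)
        - (if (f ⟨0, hn⟩ % 6 = 4 ∨ f ⟨0, hn⟩ % 6 = 5) then
            ∏ k : Fin n, ((f k : ZMod p))⁻¹ else 0))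
      = ((chiSix ((f ⟨0, hn⟩ : ℕ) : ℤ) : ℤ) : ZMod p) * ∏ k : Fin n, ((f k : ZMod p))⁻¹ := by
    intro f _
    set a := f ⟨0, hn⟩ with ha
    rw [chiSix_natCast a]
    by_cases hA : a % 6 = 1 ∨ a % 6 = 2
    · rw [if_pos hA, if_neg (by omega), if_pos hA]
      push_cast; ring
    · by_cases hB : a % 6 = 4 ∨ a % 6 = 5
      · rw [if_neg hA, if_pos hB, if_neg hA, if_pos hB]
        push_cast; ring
      · rw [if_neg hA, if_neg hB, if_neg hA, if_neg hB]
        push_cast; ring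
  rw [Finset.sum_congr rfl hstep1,
    sum_tuples_eq_sum_subsets n p hn (fun a => ((chiSix ((a : ℕ) : ℤ) : ℤ) : ZMod p))
      (fun j => ((j : ZMod p))⁻¹),
    sum_subsets_split_min p n hn (fun a => ((chiSix ((a : ℕ) : ℤ) : ℤ) : ZMod p))
      (fun j => ((j : ZMod p))⁻¹)]
  have hstep2 : ∑ m ∈ Finset.Ioo 0 p,
      ((chiSix ((m : ℕ) : ℤ) : ℤ) : ZMod p) * (((m : ZMod p))⁻¹ *
        ∑ t ∈ (Finset.Ioo m p).powersetCard (n - 1), ∏ j ∈ t, ((j : ZMod p))⁻¹)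
      = (curiousF p).coeff (n - 1) := by
    rw [curiousF, Polynomial.finset_sum_coeff]
    refine Finset.sum_congr rfl fun m hm => ?_
    rw [Polynomial.coeff_C_mul]
    have hg : ∀ j ∈ Finset.Ioo m p, ((j : ℕ) : ZMod p) ≠ 0 := by
      intro j hj
      rw [Finset.mem_Ioo] at hj
      rw [Ne, ZMod.natCast_eq_zero_iff]
      intro hdvd
      have := Nat.le_of_dvd (by omega) hdvd
      omega
    rw [esymm_inv_eq_coeff (Finset.Ioo m p) (fun j => ((j : ℕ) : ZMod p)) hg (n - 1)]
    ring
  rw [hstep2]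
  have h3 : (curiousF p).coeff (n - 1) = (curiousPsi p).coeff n := by
    rw [← X_mul_curiousF p]
    obtain ⟨m, hm⟩ : ∃ m, n = m + 1 := ⟨n - 1, by omega⟩
    rw [hm, Polynomial.coeff_X_mul, Nat.add_sub_cancel]
  rw [h3, curiousPsi_coeff_eq_zero p hpodd hodd]
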